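/- Let C be a nonempty bounded closed convex subset of a Hilbert space H and T : C → C a uniformly continuous asymptotically nonexpansive mapping with k_n → 1 and F(T) ≠ ∅. Let α_n, β_n ∈ [0,1] with limsup α_n < 1 and β_n → 1. Define x₀ ∈ C, z_n = β_n x_n + (1−β_n)Tⁿx_n, y_n = α_n x_n + (1−α_n)Tⁿz_n, C_n = {v ∈ C : ‖y_n − v‖² ≤ ‖x_n − v‖² + (1−α_n)(k_n²‖z_n‖² − ‖x_n‖² + (k_n²−1)M − 2⟨v, k_n²z_n − x_n⟩)}, Q_n = {v ∈ C : ⟨x₀ − x_n, x_n − v⟩ ≥ 0}, x_{n+1} = P_{C_n ∩ Q_n} x₀, where M > ‖v‖² for all v ∈ C. Then x_n converges strongly to P_{F(T)} x₀. -/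

import Mathlib

open Filter

/-- Every bounded real sequence converges along an ultrafilter. -/
lemma ultralim_exists (𝒰 : Ultrafilter ℕ) (f : ℕ → ℝ) (B : ℝ) (hf : ∀ n, |f n| ≤ B) :
    ∃ c, Filter.Tendsto f 𝒰 (nhds c) := by
  have hmem : ∀ n, f n ∈ Set.Icc (-B) B := fun n => abs_le.mp (hf n)
  have hle : ↑(𝒰.map f) ≤ Filter.principal (Set.Icc (-B) B) := by
    simp only [Ultrafilter.coe_map, Filter.le_principal_iff, Filter.mem_map]
    exact Filter.univ_mem' hmem
  obtain ⟨c, -, hc⟩ := (isCompact_Icc (a := -B) (b := B)).ultrafilter_le_nhds (𝒰.map f) hle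
  exact ⟨c, hc⟩

/-- Weak ultralimit of a bounded sequence in a real Hilbert space. -/
lemma weak_ultralim_exists {H : Type*} [NormedAddCommGroup H] [InnerProductSpace ℝ H]
    [CompleteSpace H] (𝒰 : Ultrafilter ℕ) (x : ℕ → H) (B : ℝ) (hx : ∀ n, ‖x n‖ ≤ B) :
    ∃ p : H, ∀ v : H, Filter.Tendsto (fun n => (inner ℝ (x n) v : ℝ)) 𝒰 (nhds (inner ℝ p v)) := by
  have key : ∀ v : H, ∃ c, Filter.Tendsto (fun n => (inner ℝ (x n) v : ℝ)) 𝒰 (nhds c) := by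
    intro v
    refine ultralim_exists 𝒰 _ (B * ‖v‖) fun n => ?_
    calc |(inner ℝ (x n) v : ℝ)| ≤ ‖x n‖ * ‖v‖ := abs_real_inner_le_norm _ _
      _ ≤ B * ‖v‖ := by
          have := hx n; nlinarith [norm_nonneg v, norm_nonneg (x n)]
  choose g hg using key
  have hadd : ∀ v w, g (v + w) = g v + g w := by
    intro v w
    refine tendsto_nhds_unique (l := (𝒰 : Filter ℕ)) ?_ (((hg v).add (hg w)))
    have : (fun n => (inner ℝ (x n) (v + w) : ℝ)) = fun n => (inner ℝ (x n) v : ℝ) + inner ℝ (x n) w := by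
      ext n; exact inner_add_right _ _ _
    rw [← this]; exact hg (v + w)
  have hsmul : ∀ (c : ℝ) v, g (c • v) = c * g v := by
    intro c v
    refine tendsto_nhds_unique (l := (𝒰 : Filter ℕ)) ?_ ((hg v).const_mul c)
    have : (fun n => (inner ℝ (x n) (c • v) : ℝ)) = fun n => c * (inner ℝ (x n) v : ℝ) := by
      ext n; exact real_inner_smul_right _ _ _
    rw [← this]; exact hg (c • v)
  have hbound : ∀ v, |g v| ≤ B * ‖v‖ := by
    intro v
    have h1 : Filter.Tendsto (fun n => |(inner ℝ (x n) v : ℝ)|) 𝒰 (nhds |g v|) :=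
      (hg v).abs
    refine le_of_tendsto h1 (Filter.univ_mem' fun n => ?_)
    calc |(inner ℝ (x n) v : ℝ)| ≤ ‖x n‖ * ‖v‖ := abs_real_inner_le_norm _ _
      _ ≤ B * ‖v‖ := by have := hx n; nlinarith [norm_nonneg v, norm_nonneg (x n)]
  let G : H →ₗ[ℝ] ℝ := { toFun := g, map_add' := hadd, map_smul' := hsmul }
  let Gc : H →L[ℝ] ℝ := G.mkContinuous B (fun v => by
    simpa [G, Real.norm_eq_abs] using hbound v)
  refine ⟨(InnerProductSpace.toDual ℝ H).symm Gc, fun v => ?_⟩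
  rw [InnerProductSpace.toDual_symm_apply]
  exact hg v

/-- A weak (ultra)limit of a sequence in a closed convex set lies in that set. -/
lemma weak_lim_mem_closed_convex {H : Type*} [NormedAddCommGroup H] [InnerProductSpace ℝ H]
    [CompleteSpace H] {C : Set H} (hclosed : IsClosed C) (hconv : Convex ℝ C)
    (𝒰 : Ultrafilter ℕ) (x : ℕ → H) (hxC : ∀ n, x n ∈ C) (p : H)
    (hp : ∀ v : H, Filter.Tendsto (fun n => (inner ℝ (x n) v : ℝ)) 𝒰 (nhds (inner ℝ p v))) :
    p ∈ C := by
  by_contra hpC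
  obtain ⟨f, u, hfu, hup⟩ := geometric_hahn_banach_closed_point hconv hclosed hpC
  set w := (InnerProductSpace.toDual ℝ H).symm f with hw
  have hfy : ∀ y : H, f y = (inner ℝ y w : ℝ) := by
    intro y
    rw [real_inner_comm]
    exact (InnerProductSpace.toDual_symm_apply).symm
  have ht : Filter.Tendsto (fun n => f (x n)) 𝒰 (nhds (f p)) := by
    simp only [hfy]; exact hp w
  have : f p ≤ u := le_of_tendsto ht (Filter.univ_mem' fun n => (hfu _ (hxC n)).le)
  exact absurd (this.trans_lt hup) (lt_irrefl _)

/-- Convexity inequality for the squared norm. -/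
lemma convex_normsq {H : Type*} [NormedAddCommGroup H] [InnerProductSpace ℝ H]
    {a : ℝ} (ha : 0 ≤ a) (ha1 : a ≤ 1) (u w : H) :
    ‖a • u + (1 - a) • w‖ ^ 2 ≤ a * ‖u‖ ^ 2 + (1 - a) * ‖w‖ ^ 2 := by
  have hexp : ‖a • u + (1 - a) • w‖ ^ 2
      = a ^ 2 * ‖u‖ ^ 2 + 2 * (a * (1 - a)) * inner ℝ u w + (1 - a) ^ 2 * ‖w‖ ^ 2 := by
    rw [norm_add_sq_real, real_inner_smul_left, real_inner_smul_right,
      norm_smul, norm_smul]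
    rw [Real.norm_eq_abs, Real.norm_eq_abs, abs_of_nonneg ha, abs_of_nonneg (by linarith)]
    ring
  have hiuw : (inner ℝ u w : ℝ) ≤ ‖u‖ * ‖w‖ := real_inner_le_norm u w
  nlinarith [sq_nonneg (‖u‖ - ‖w‖), mul_nonneg ha (sub_nonneg.mpr ha1), norm_nonneg u, norm_nonneg w]

/-- Variational inequality for a minimizer of the distance over a convex set. -/
lemma proj_variational {H : Type*} [NormedAddCommGroup H] [InnerProductSpace ℝ H]
    {S : Set H} (hS : Convex ℝ S) {x₀ w : H} (hw : w ∈ S)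
    (hmin : ∀ v ∈ S, ‖x₀ - w‖ ≤ ‖x₀ - v‖) {p : H} (hp : p ∈ S) :
    0 ≤ (inner ℝ (x₀ - w) (w - p) : ℝ) := by
  rcases eq_or_ne p w with rfl | hpw
  · simp
  by_contra hneg
  push_neg at hneg
  have hcpos : 0 < (inner ℝ (x₀ - w) (p - w) : ℝ) := by
    have h : (inner ℝ (x₀ - w) (p - w) : ℝ) = - inner ℝ (x₀ - w) (w - p) := by
      rw [show p - w = -(w - p) by abel, inner_neg_right]
    rw [h]; linarith
  have hqpos : 0 < ‖p - w‖ ^ 2 :=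
    pow_pos (norm_pos_iff.mpr (sub_ne_zero.mpr hpw)) 2
  obtain ⟨t, ht0, ht1, htq⟩ : ∃ t : ℝ, 0 < t ∧ t ≤ 1 ∧
      t * ‖p - w‖ ^ 2 ≤ (inner ℝ (x₀ - w) (p - w) : ℝ) := by
    refine ⟨min 1 ((inner ℝ (x₀ - w) (p - w) : ℝ) / ‖p - w‖ ^ 2),
      lt_min one_pos (div_pos hcpos hqpos), min_le_left _ _, ?_⟩
    calc min 1 ((inner ℝ (x₀ - w) (p - w) : ℝ) / ‖p - w‖ ^ 2) * ‖p - w‖ ^ 2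
        ≤ ((inner ℝ (x₀ - w) (p - w) : ℝ) / ‖p - w‖ ^ 2) * ‖p - w‖ ^ 2 :=
          mul_le_mul_of_nonneg_right (min_le_right _ _) (le_of_lt hqpos)
      _ = _ := by field_simp; exact div_self (norm_pos_iff.mpr (sub_ne_zero.mpr hpw)).ne'
  have hv : (1 - t) • w + t • p ∈ S := hS hw hp (by linarith) (le_of_lt ht0) (by ring)
  have hmin' := hmin _ hv
  have hid : x₀ - ((1 - t) • w + t • p) = (x₀ - w) - t • (p - w) := by
    rw [smul_sub, sub_smul]; simp only [one_smul]; abel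
  have hexp : ‖x₀ - ((1 - t) • w + t • p)‖ ^ 2
      = ‖x₀ - w‖ ^ 2 - 2 * t * (inner ℝ (x₀ - w) (p - w) : ℝ) + t ^ 2 * ‖p - w‖ ^ 2 := by
    rw [hid, norm_sub_sq_real, real_inner_smul_right, norm_smul, Real.norm_eq_abs,
      abs_of_nonneg (le_of_lt ht0)]
    ring
  have hsq : ‖x₀ - w‖ ^ 2 ≤ ‖x₀ - ((1 - t) • w + t • p)‖ ^ 2 :=
    pow_le_pow_left₀ (norm_nonneg _) hmin' 2
  rw [hexp] at hsq
  nlinarith [mul_le_mul_of_nonneg_left htq ht0.le, mul_pos ht0 hcpos]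

private lemma le_of_sq_le_sq' {a b : ℝ} (ha : 0 ≤ a) (hb : 0 ≤ b) (h : a ^ 2 ≤ b ^ 2) :
    a ≤ b := by nlinarith

set_option maxHeartbeats 4000000 in
/-- Theorem 3.1: strong convergence of the modified Ishikawa hybrid
projection algorithm for uniformly continuous asymptotically nonexpansive mappings. -/
theorem hybrid_ishikawa_strong_convergence
    (H : Type*) [NormedAddCommGroup H] [InnerProductSpace ℝ H] [CompleteSpace H]
    (C : Set H) (hne : C.Nonempty) (hbdd : Bornology.IsBounded C)
    (hclosed : IsClosed C) (hconv : Convex ℝ C)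
    (T : H → H) (hT : Set.MapsTo T C C)
    (hucont : UniformContinuousOn T C)
    (k : ℕ → ℝ) (hk1 : ∀ n, 1 ≤ k n) (hklim : Filter.Tendsto k Filter.atTop (nhds 1))
    (hane : ∀ n : ℕ, ∀ u ∈ C, ∀ v ∈ C, ‖T^[n] u - T^[n] v‖ ≤ k n * ‖u - v‖)
    (hfix : {q ∈ C | T q = q}.Nonempty)
    (α β : ℕ → ℝ) (hα : ∀ n, α n ∈ Set.Icc (0:ℝ) 1) (hβ : ∀ n, β n ∈ Set.Icc (0:ℝ) 1)
    (hαsup : Filter.limsup α Filter.atTop < 1)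
    (hβlim : Filter.Tendsto β Filter.atTop (nhds 1))
    (M : ℝ) (hM : ∀ v ∈ C, ‖v‖ ^ 2 < M)
    (x z y : ℕ → H) (x₀ : H) (hx₀ : x 0 = x₀) (hx₀C : x₀ ∈ C)
    (hz : ∀ n, z n = β n • x n + (1 - β n) • T^[n] (x n))
    (hy : ∀ n, y n = α n • x n + (1 - α n) • T^[n] (z n))
    (Cs Qs : ℕ → Set H)
    (hCs : ∀ n, Cs n = {v ∈ C | ‖y n - v‖ ^ 2 ≤ ‖x n - v‖ ^ 2 +
        (1 - α n) * ((k n) ^ 2 * ‖z n‖ ^ 2 - ‖x n‖ ^ 2 + ((k n) ^ 2 - 1) * M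
          - 2 * (inner ℝ v ((k n) ^ 2 • z n - x n) : ℝ))})
    (hQs : ∀ n, Qs n = {v ∈ C | (inner ℝ (x₀ - x n) (x n - v) : ℝ) ≥ 0})
    (hxproj : ∀ n, x (n + 1) ∈ Cs n ∩ Qs n ∧
        ∀ v ∈ Cs n ∩ Qs n, ‖x₀ - x (n + 1)‖ ≤ ‖x₀ - v‖) :
    ∃ q, (q ∈ C ∧ T q = q) ∧ (∀ p ∈ C, T p = p → ‖x₀ - q‖ ≤ ‖x₀ - p‖) ∧
      Filter.Tendsto x Filter.atTop (nhds q) := by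
  classical
  -- ## Setup: bounds and membership
  obtain ⟨B, hB⟩ : ∃ B, ∀ u ∈ C, ‖u‖ ≤ B := by
    obtain ⟨r, hr⟩ := hbdd.subset_closedBall 0
    exact ⟨r, fun u hu => by simpa using hr hu⟩
  have hB0 : 0 ≤ B := (norm_nonneg x₀).trans (hB _ hx₀C)
  have hTiter : ∀ m : ℕ, ∀ u ∈ C, T^[m] u ∈ C := fun m u hu => hT.iterate m hu
  have hxC : ∀ n, x n ∈ C := by
    intro n
    cases n with
    | zero => rw [hx₀]; exact hx₀C
    | succ m =>
      have := (hxproj m).1.1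
      rw [hCs m] at this
      exact this.1
  have hzC : ∀ n, z n ∈ C := by
    intro n
    rw [hz n]
    exact hconv (hxC n) (hTiter n _ (hxC n)) (hβ n).1 (by linarith [(hβ n).2]) (by ring)
  have hyC : ∀ n, y n ∈ C := by
    intro n
    rw [hy n]
    exact hconv (hxC n) (hTiter n _ (hzC n)) (hα n).1 (by linarith [(hα n).2]) (by ring)
  have hM0 : 0 < M := lt_of_le_of_lt (sq_nonneg ‖x₀‖) (hM _ hx₀C)
  -- ## Fixed points belong to Cs n
  have memCs : ∀ p, p ∈ C → T p = p → ∀ n, p ∈ Cs n := by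
    intro p hpC hpT n
    have hTp : ∀ m : ℕ, T^[m] p = p := fun m => Function.iterate_fixed hpT m
    rw [hCs n]
    refine ⟨hpC, ?_⟩
    have ha0 := (hα n).1; have ha1 := (hα n).2
    have hk := hk1 n
    -- step 1 : convexity of squared norm
    have hyid : y n - p = α n • (x n - p) + (1 - α n) • (T^[n] (z n) - p) := by
      rw [hy n]; module
    have step1 : ‖y n - p‖ ^ 2 ≤ α n * ‖x n - p‖ ^ 2 + (1 - α n) * ‖T^[n] (z n) - p‖ ^ 2 := by
      rw [hyid]; exact convex_normsq ha0 ha1 _ _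
    -- step 2 : asymptotic nonexpansiveness
    have step2 : ‖T^[n] (z n) - p‖ ^ 2 ≤ (k n) ^ 2 * ‖z n - p‖ ^ 2 := by
      have h := hane n (z n) (hzC n) p hpC
      rw [hTp n] at h
      have := pow_le_pow_left₀ (norm_nonneg _) h 2
      calc ‖T^[n] (z n) - p‖ ^ 2 ≤ (k n * ‖z n - p‖) ^ 2 := this
        _ = (k n) ^ 2 * ‖z n - p‖ ^ 2 := by ring
    -- algebra
    have hMp : ‖p‖ ^ 2 < M := hM p hpC
    have e1 : ‖z n - p‖ ^ 2 = ‖z n‖ ^ 2 - 2 * inner ℝ (z n) p + ‖p‖ ^ 2 := norm_sub_sq_real _ _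
    have e2 : ‖x n - p‖ ^ 2 = ‖x n‖ ^ 2 - 2 * inner ℝ (x n) p + ‖p‖ ^ 2 := norm_sub_sq_real _ _
    have e3 : (inner ℝ p ((k n) ^ 2 • z n - x n) : ℝ)
        = (k n) ^ 2 * inner ℝ (z n) p - inner ℝ (x n) p := by
      rw [inner_sub_right, real_inner_smul_right, real_inner_comm p (z n),
        real_inner_comm p (x n)]
    rw [e3]
    have hk2 : (0:ℝ) ≤ (k n) ^ 2 - 1 := by nlinarith
    have e1' : (k n) ^ 2 * ‖z n - p‖ ^ 2
        = (k n) ^ 2 * ‖z n‖ ^ 2 - 2 * ((k n) ^ 2 * inner ℝ (z n) p) + (k n) ^ 2 * ‖p‖ ^ 2 := by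
      rw [e1]; ring
    have hbr : (k n) ^ 2 * ‖z n - p‖ ^ 2 ≤ ‖x n - p‖ ^ 2 + ((k n) ^ 2 * ‖z n‖ ^ 2 - ‖x n‖ ^ 2
        + ((k n) ^ 2 - 1) * M - 2 * ((k n) ^ 2 * inner ℝ (z n) p - inner ℝ (x n) p)) := by
      nlinarith [e1', e2, mul_nonneg hk2 (sub_nonneg.mpr hMp.le)]
    have h1a : (0:ℝ) ≤ 1 - α n := by linarith
    calc ‖y n - p‖ ^ 2 ≤ α n * ‖x n - p‖ ^ 2 + (1 - α n) * ‖T^[n] (z n) - p‖ ^ 2 := step1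
      _ ≤ α n * ‖x n - p‖ ^ 2 + (1 - α n) * ((k n) ^ 2 * ‖z n - p‖ ^ 2) := by
          nlinarith [mul_le_mul_of_nonneg_left step2 h1a]
      _ ≤ α n * ‖x n - p‖ ^ 2 + (1 - α n) * (‖x n - p‖ ^ 2 + ((k n) ^ 2 * ‖z n‖ ^ 2 - ‖x n‖ ^ 2
          + ((k n) ^ 2 - 1) * M - 2 * ((k n) ^ 2 * inner ℝ (z n) p - inner ℝ (x n) p))) := by
          nlinarith [mul_le_mul_of_nonneg_left hbr h1a]
      _ = ‖x n - p‖ ^ 2 + (1 - α n) * ((k n) ^ 2 * ‖z n‖ ^ 2 - ‖x n‖ ^ 2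
          + ((k n) ^ 2 - 1) * M - 2 * ((k n) ^ 2 * inner ℝ (z n) p - inner ℝ (x n) p)) := by ring
  -- ## Convexity of Cs n and Qs n
  have hCsconv : ∀ n, Convex ℝ (Cs n) := by
    intro n
    have hset : Cs n = C ∩ {v : H | (inner ℝ ((2:ℝ) • (x n - y n)
        + (2 * (1 - α n)) • ((k n) ^ 2 • z n - x n)) v : ℝ)
        ≤ ‖x n‖ ^ 2 - ‖y n‖ ^ 2
          + (1 - α n) * ((k n) ^ 2 * ‖z n‖ ^ 2 - ‖x n‖ ^ 2 + ((k n) ^ 2 - 1) * M)} := by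
      rw [hCs n]
      ext v
      simp only [Set.mem_sep_iff, Set.mem_inter_iff, Set.mem_setOf_eq]
      refine and_congr_right fun hv => ?_
      have f1 : ‖y n - v‖ ^ 2 = ‖y n‖ ^ 2 - 2 * inner ℝ (y n) v + ‖v‖ ^ 2 :=
        norm_sub_sq_real _ _
      have f2 : ‖x n - v‖ ^ 2 = ‖x n‖ ^ 2 - 2 * inner ℝ (x n) v + ‖v‖ ^ 2 :=
        norm_sub_sq_real _ _
      have f3 : (inner ℝ ((2:ℝ) • (x n - y n)
          + (2 * (1 - α n)) • ((k n) ^ 2 • z n - x n)) v : ℝ)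
          = 2 * ((inner ℝ (x n) v : ℝ) - inner ℝ (y n) v)
            + 2 * (1 - α n) * (inner ℝ v ((k n) ^ 2 • z n - x n) : ℝ) := by
        rw [inner_add_left, real_inner_smul_left, real_inner_smul_left, inner_sub_left,
          real_inner_comm ((k n) ^ 2 • z n - x n) v]
        try ring
      constructor <;> intro h <;> nlinarith [f1, f2, f3, h]
    rw [hset]
    exact hconv.inter (convex_halfSpace_le ⟨fun a b => inner_add_right _ _ _,
      fun c a => real_inner_smul_right _ _ _⟩ _)
  have hQsconv : ∀ n, Convex ℝ (Qs n) := by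
    intro n
    have hset : Qs n = C ∩ {v : H | (inner ℝ (x₀ - x n) v : ℝ)
        ≤ (inner ℝ (x₀ - x n) (x n) : ℝ)} := by
      rw [hQs n]
      ext v
      simp only [Set.mem_sep_iff, Set.mem_inter_iff, Set.mem_setOf_eq, ge_iff_le]
      refine and_congr_right fun hv => ?_
      have g1 : (inner ℝ (x₀ - x n) (x n - v) : ℝ)
          = (inner ℝ (x₀ - x n) (x n) : ℝ) - inner ℝ (x₀ - x n) v := inner_sub_right _ _ _
      constructor <;> intro h <;> linarith [g1, h]
    rw [hset]
    exact hconv.inter (convex_halfSpace_le ⟨fun a b => inner_add_right _ _ _,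
      fun c a => real_inner_smul_right _ _ _⟩ _)
  -- ## Fixed points belong to Qs n
  have memQs : ∀ p, p ∈ C → T p = p → ∀ n, p ∈ Qs n := by
    intro p hpC hpT n
    induction n with
    | zero =>
      rw [hQs 0]
      refine ⟨hpC, ?_⟩
      simp [hx₀]
    | succ m ih =>
      have hpS : p ∈ Cs m ∩ Qs m := ⟨memCs p hpC hpT m, ih⟩
      have hvar := proj_variational ((hCsconv m).inter (hQsconv m)) (hxproj m).1
        (hxproj m).2 hpS
      rw [hQs (m + 1)]
      exact ⟨hpC, hvar⟩
  -- ## Projection inequality for Qs n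
  have hQkey : ∀ n, ∀ v ∈ Qs n, ‖x₀ - x n‖ ^ 2 + ‖x n - v‖ ^ 2 ≤ ‖x₀ - v‖ ^ 2 := by
    intro n v hv
    rw [hQs n] at hv
    have h1 : x₀ - v = (x₀ - x n) + (x n - v) := by abel
    have h2 : ‖x₀ - v‖ ^ 2 = ‖x₀ - x n‖ ^ 2 + 2 * inner ℝ (x₀ - x n) (x n - v)
        + ‖x n - v‖ ^ 2 := by rw [h1, norm_add_sq_real]
    have := hv.2
    linarith
  -- ## Monotone norms, limit d
  set c : ℕ → ℝ := fun n => ‖x₀ - x n‖ with hcdef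
  have hcn : ∀ n, c n = ‖x₀ - x n‖ := fun n => by rw [hcdef]
  have hc0 : c 0 = 0 := by rw [hcn, hx₀, sub_self, norm_zero]
  have hcmono : Monotone c := by
    apply monotone_nat_of_le_succ
    intro n
    rw [hcn, hcn]
    have h := hQkey n (x (n + 1)) (hxproj n).1.2
    refine le_of_sq_le_sq' (norm_nonneg _) (norm_nonneg _) ?_
    nlinarith [sq_nonneg ‖x n - x (n+1)‖]
  have hcbdd : BddAbove (Set.range c) := by
    refine ⟨2 * B, ?_⟩
    rintro r ⟨n, rfl⟩
    rw [hcn]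
    calc ‖x₀ - x n‖ ≤ ‖x₀‖ + ‖x n‖ := norm_sub_le _ _
      _ ≤ 2 * B := by linarith [hB _ hx₀C, hB _ (hxC n)]
  set d : ℝ := ⨆ n, c n with hddef
  have hd : Filter.Tendsto c Filter.atTop (nhds d) := tendsto_atTop_ciSup hcmono hcbdd
  have hcd : ∀ n, c n ≤ d := fun n => le_ciSup hcbdd n
  have hd0 : 0 ≤ d := hc0 ▸ hcd 0
  -- d is at most the distance to any fixed point
  have hdle : ∀ p, p ∈ C → T p = p → d ≤ ‖x₀ - p‖ := by
    intro p hpC hpT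
    refine ciSup_le fun n => ?_
    cases n with
    | zero => rw [hc0]; exact norm_nonneg _
    | succ m => rw [hcn]; exact (hxproj m).2 p ⟨memCs p hpC hpT m, memQs p hpC hpT m⟩
  -- consecutive differences tend to 0
  have sqrt_trick : ∀ f : ℕ → ℝ, (∀ n, 0 ≤ f n) →
      Filter.Tendsto (fun n => f n ^ 2) Filter.atTop (nhds 0) →
      Filter.Tendsto f Filter.atTop (nhds 0) := by
    intro f hf h
    have h2 := h.sqrt
    rw [Real.sqrt_zero] at h2
    convert h2 using 2 with n
    rw [Real.sqrt_sq (hf n)]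
  have hs : Filter.Tendsto (fun n => ‖x n - x (n + 1)‖) Filter.atTop (nhds 0) := by
    apply sqrt_trick _ (fun n => norm_nonneg _)
    have hlim : Filter.Tendsto (fun n => c (n + 1) ^ 2 - c n ^ 2) Filter.atTop (nhds 0) := by
      have h1 : Filter.Tendsto (fun n => c (n + 1)) Filter.atTop (nhds d) := by
        exact hd.comp (tendsto_add_atTop_nat 1)
      have := (h1.pow 2).sub (hd.pow 2)
      simpa using this
    refine squeeze_zero (fun n => sq_nonneg _) (fun n => ?_) hlim
    have h := hQkey n (x (n + 1)) (hxproj n).1.2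
    rw [hcn, hcn]
    linarith
  -- ## Asymptotic regularity
  have hzx : Filter.Tendsto (fun n => ‖z n - x n‖) Filter.atTop (nhds 0) := by
    have hbound : ∀ n, ‖z n - x n‖ ≤ (1 - β n) * (2 * B) := by
      intro n
      have hid : z n - x n = (1 - β n) • (T^[n] (x n) - x n) := by rw [hz n]; module
      rw [hid, norm_smul, Real.norm_eq_abs, abs_of_nonneg (by linarith [(hβ n).2])]
      have : ‖T^[n] (x n) - x n‖ ≤ 2 * B := by
        calc ‖T^[n] (x n) - x n‖ ≤ ‖T^[n] (x n)‖ + ‖x n‖ := norm_sub_le _ _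
          _ ≤ 2 * B := by linarith [hB _ (hTiter n _ (hxC n)), hB _ (hxC n)]
      nlinarith [sub_nonneg.mpr (hβ n).2]
    refine squeeze_zero (fun n => norm_nonneg _) hbound ?_
    have := (tendsto_const_nhds (x := (1:ℝ)) (f := Filter.atTop (α := ℕ))).sub hβlim
    have h2 := this.mul_const (2 * B)
    simpa using h2
  -- the error term E n tends to 0
  set E : ℕ → ℝ := fun n => (k n) ^ 2 * ‖z n‖ ^ 2 - ‖x n‖ ^ 2 + ((k n) ^ 2 - 1) * M
      - 2 * (inner ℝ (x (n + 1)) ((k n) ^ 2 • z n - x n) : ℝ) with hEdef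
  have hEn : ∀ n, E n = (k n) ^ 2 * ‖z n‖ ^ 2 - ‖x n‖ ^ 2 + ((k n) ^ 2 - 1) * M
      - 2 * (inner ℝ (x (n + 1)) ((k n) ^ 2 • z n - x n) : ℝ) := fun n => by rw [hEdef]
  have hE : Filter.Tendsto E Filter.atTop (nhds 0) := by
    have hEbound : ∀ n, |E n| ≤ ((k n) ^ 2 - 1) * (3 * B ^ 2 + M) + 4 * B * ‖z n - x n‖ := by
      intro n
      have hkn := hk1 n
      have h1 : (inner ℝ (x (n+1)) ((k n) ^ 2 • z n - x n) : ℝ)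
          = ((k n) ^ 2 - 1) * inner ℝ (x (n+1)) (z n) + inner ℝ (x (n+1)) (z n - x n) := by
        rw [inner_sub_right, real_inner_smul_right, inner_sub_right]; ring
      have h2 : ‖z n‖ ^ 2 - ‖x n‖ ^ 2 = (inner ℝ (z n + x n) (z n - x n) : ℝ) := by
        rw [inner_add_left, inner_sub_right, inner_sub_right, real_inner_self_eq_norm_sq,
          real_inner_self_eq_norm_sq, real_inner_comm (x n) (z n)]
        ring
      have hEeq : E n = ((k n) ^ 2 - 1) * (‖z n‖ ^ 2 + M - 2 * inner ℝ (x (n+1)) (z n))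
          + (inner ℝ (z n + x n) (z n - x n) : ℝ) - 2 * inner ℝ (x (n+1)) (z n - x n) := by
        rw [hEn]
        linear_combination h2 - 2 * h1
      have hb1 : |‖z n‖ ^ 2 + M - 2 * (inner ℝ (x (n+1)) (z n) : ℝ)| ≤ 3 * B ^ 2 + M := by
        have i1 : |(inner ℝ (x (n+1)) (z n) : ℝ)| ≤ B * B := by
          calc |(inner ℝ (x (n+1)) (z n) : ℝ)| ≤ ‖x (n+1)‖ * ‖z n‖ := abs_real_inner_le_norm _ _
            _ ≤ B * B := by
                have := hB _ (hxC (n+1)); have := hB _ (hzC n)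
                nlinarith [norm_nonneg (x (n+1)), norm_nonneg (z n)]
        have i2 : ‖z n‖ ^ 2 ≤ B ^ 2 := by nlinarith [hB _ (hzC n), norm_nonneg (z n)]
        rw [abs_le]
        constructor <;> [nlinarith [abs_le.mp i1, sq_nonneg ‖z n‖]; nlinarith [abs_le.mp i1]]
      have hb2 : |(inner ℝ (z n + x n) (z n - x n) : ℝ)| ≤ 2 * B * ‖z n - x n‖ := by
        calc |(inner ℝ (z n + x n) (z n - x n) : ℝ)| ≤ ‖z n + x n‖ * ‖z n - x n‖ :=
            abs_real_inner_le_norm _ _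
          _ ≤ 2 * B * ‖z n - x n‖ := by
              have : ‖z n + x n‖ ≤ 2 * B := by
                calc ‖z n + x n‖ ≤ ‖z n‖ + ‖x n‖ := norm_add_le _ _
                  _ ≤ 2 * B := by linarith [hB _ (hzC n), hB _ (hxC n)]
              nlinarith [norm_nonneg (z n - x n)]
      have hb3 : |(inner ℝ (x (n+1)) (z n - x n) : ℝ)| ≤ B * ‖z n - x n‖ := by
        calc |(inner ℝ (x (n+1)) (z n - x n) : ℝ)| ≤ ‖x (n+1)‖ * ‖z n - x n‖ :=
            abs_real_inner_le_norm _ _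
          _ ≤ B * ‖z n - x n‖ := by nlinarith [hB _ (hxC (n+1)), norm_nonneg (z n - x n)]
      have hk2 : 0 ≤ (k n) ^ 2 - 1 := by nlinarith
      rw [hEeq]
      have := abs_le.mp hb1; have := abs_le.mp hb2; have := abs_le.mp hb3
      rw [abs_le]
      constructor <;> nlinarith [mul_le_mul_of_nonneg_left (abs_le.mp hb1).2 hk2,
        mul_le_mul_of_nonneg_left (abs_le.mp hb1).1 hk2]
    have h1 : Filter.Tendsto (fun n => ((k n) ^ 2 - 1) * (3 * B ^ 2 + M)
        + 4 * B * ‖z n - x n‖) Filter.atTop (nhds ((1 ^ 2 - 1) * (3 * B ^ 2 + M) + 4 * B * 0)) :=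
      (((hklim.pow 2).sub tendsto_const_nhds).mul_const _).add ((hzx.const_mul _))
    have h2 : Filter.Tendsto (fun n => ((k n) ^ 2 - 1) * (3 * B ^ 2 + M)
        + 4 * B * ‖z n - x n‖) Filter.atTop (nhds 0) := by simpa using h1
    exact squeeze_zero_norm (fun n => by rw [Real.norm_eq_abs]; exact hEbound n) h2
  -- ‖y n - x n‖ → 0
  have hyx : Filter.Tendsto (fun n => ‖y n - x n‖) Filter.atTop (nhds 0) := by
    have hyx1 : Filter.Tendsto (fun n => ‖y n - x (n + 1)‖) Filter.atTop (nhds 0) := by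
      apply sqrt_trick _ (fun n => norm_nonneg _)
      have hlim : Filter.Tendsto (fun n => ‖x n - x (n + 1)‖ ^ 2 + |E n|)
          Filter.atTop (nhds 0) := by
        have := ((hs.pow 2).add hE.abs)
        simpa using this
      refine squeeze_zero (fun n => sq_nonneg _) (fun n => ?_) hlim
      have hmem := (hxproj n).1.1
      rw [hCs n] at hmem
      have h := hmem.2
      have ha1 := (hα n).2; have ha0 := (hα n).1
      have hEb : (1 - α n) * E n ≤ |E n| := by
        nlinarith [le_abs_self (E n), abs_nonneg (E n)]
      rw [hEn] at hEb
      linarith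
    have hbound : ∀ n, ‖y n - x n‖ ≤ ‖y n - x (n + 1)‖ + ‖x n - x (n + 1)‖ := by
      intro n
      calc ‖y n - x n‖ = ‖(y n - x (n+1)) - (x n - x (n+1))‖ := by congr 1; abel
        _ ≤ ‖y n - x (n+1)‖ + ‖x n - x (n+1)‖ := norm_sub_le _ _
    refine squeeze_zero (fun n => norm_nonneg _) hbound ?_
    have := hyx1.add hs
    simpa using this
  -- ‖T^[n] (z n) - x n‖ → 0, using limsup α < 1
  have hTzx : Filter.Tendsto (fun n => ‖T^[n] (z n) - x n‖) Filter.atTop (nhds 0) := by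
    set a : ℝ := (Filter.limsup α Filter.atTop + 1) / 2 with hadef
    have ha1 : a < 1 := by rw [hadef]; linarith
    have hev : ∀ᶠ n in Filter.atTop, α n < a := by
      apply Filter.eventually_lt_of_limsup_lt
      · rw [hadef]; linarith
      · exact Filter.isBoundedUnder_of ⟨1, fun n => (hα n).2⟩
    have hfact : ∀ n, ‖y n - x n‖ = (1 - α n) * ‖T^[n] (z n) - x n‖ := by
      intro n
      have hid : y n - x n = (1 - α n) • (T^[n] (z n) - x n) := by rw [hy n]; module
      rw [hid, norm_smul, Real.norm_eq_abs, abs_of_nonneg (by linarith [(hα n).2])]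
    have h1a : 0 < 1 - a := by linarith
    have hg : Filter.Tendsto (fun n => 1 / (1 - a) * ‖y n - x n‖) Filter.atTop (nhds 0) := by
      have := hyx.const_mul (1 / (1 - a))
      simpa using this
    refine squeeze_zero' (g := fun n => 1 / (1 - a) * ‖y n - x n‖)
      (Filter.Eventually.of_forall fun n => norm_nonneg _) ?_ hg
    filter_upwards [hev] with n hn
    have h2 : (1 - a) * ‖T^[n] (z n) - x n‖ ≤ ‖y n - x n‖ := by
      rw [hfact n]
      have hle : 1 - a ≤ 1 - α n := by linarith
      nlinarith [norm_nonneg (T^[n] (z n) - x n)]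
    rw [show (1:ℝ) / (1 - a) * ‖y n - x n‖ = ‖y n - x n‖ / (1 - a) by ring,
      le_div_iff₀ h1a]
    linarith
  -- conclude with ‖x n - T^[n] x n‖ → 0
  have he : Filter.Tendsto (fun n => ‖x n - T^[n] (x n)‖) Filter.atTop (nhds 0) := by
    have hbound : ∀ n, ‖x n - T^[n] (x n)‖ ≤ ‖T^[n] (z n) - x n‖ + k n * ‖z n - x n‖ := by
      intro n
      calc ‖x n - T^[n] (x n)‖ = ‖(T^[n] (z n) - T^[n] (x n)) - (T^[n] (z n) - x n)‖ := by
            congr 1; abel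
        _ ≤ ‖T^[n] (z n) - T^[n] (x n)‖ + ‖T^[n] (z n) - x n‖ := norm_sub_le _ _
        _ ≤ ‖T^[n] (z n) - x n‖ + k n * ‖z n - x n‖ := by
            linarith [hane n (z n) (hzC n) (x n) (hxC n)]
    refine squeeze_zero (fun n => norm_nonneg _) hbound ?_
    have := hTzx.add (hklim.mul hzx)
    simpa using this
  -- uniform continuity composition
  have hucomp : ∀ u w : ℕ → H, (∀ n, u n ∈ C) → (∀ n, w n ∈ C) →
      Filter.Tendsto (fun n => ‖u n - w n‖) Filter.atTop (nhds 0) →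
      Filter.Tendsto (fun n => ‖T (u n) - T (w n)‖) Filter.atTop (nhds 0) := by
    intro u w huC hwC hlim
    rw [Metric.uniformContinuousOn_iff] at hucont
    rw [NormedAddCommGroup.tendsto_atTop] at hlim ⊢
    intro ε hε
    obtain ⟨δ, hδ, hδ'⟩ := hucont ε hε
    obtain ⟨N, hN⟩ := hlim δ hδ
    refine ⟨N, fun n hn => ?_⟩
    have hval := hN n hn
    rw [sub_zero, Real.norm_eq_abs, abs_of_nonneg (norm_nonneg _)] at hval
    rw [sub_zero, Real.norm_eq_abs, abs_of_nonneg (norm_nonneg _)]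
    have hdist : dist (u n) (w n) < δ := by rwa [dist_eq_norm]
    have := hδ' (u n) (huC n) (w n) (hwC n) hdist
    rwa [dist_eq_norm] at this
  -- ‖x n - T (x n)‖ → 0
  have hTx1 : Filter.Tendsto (fun n => ‖x n - T (x n)‖) Filter.atTop (nhds 0) := by
    have hr : Filter.Tendsto (fun n => ‖T^[n] (x (n + 1)) - x (n + 1)‖)
        Filter.atTop (nhds 0) := by
      have hbound : ∀ n, ‖T^[n] (x (n + 1)) - x (n + 1)‖
          ≤ k n * ‖x n - x (n + 1)‖ + ‖x n - T^[n] (x n)‖ + ‖x n - x (n + 1)‖ := by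
        intro n
        calc ‖T^[n] (x (n + 1)) - x (n + 1)‖
            = ‖(T^[n] (x (n+1)) - T^[n] (x n)) - (x n - T^[n] (x n)) - (x (n+1) - x n)‖ := by
              congr 1; abel
          _ ≤ ‖(T^[n] (x (n+1)) - T^[n] (x n)) - (x n - T^[n] (x n))‖ + ‖x (n+1) - x n‖ :=
              norm_sub_le _ _
          _ ≤ ‖T^[n] (x (n+1)) - T^[n] (x n)‖ + ‖x n - T^[n] (x n)‖ + ‖x (n+1) - x n‖ := by
              linarith [norm_sub_le (T^[n] (x (n+1)) - T^[n] (x n)) (x n - T^[n] (x n))]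
          _ ≤ k n * ‖x (n+1) - x n‖ + ‖x n - T^[n] (x n)‖ + ‖x (n+1) - x n‖ := by
              linarith [hane n (x (n+1)) (hxC (n+1)) (x n) (hxC n)]
          _ = k n * ‖x n - x (n+1)‖ + ‖x n - T^[n] (x n)‖ + ‖x n - x (n+1)‖ := by
              rw [norm_sub_rev (x (n+1)) (x n)]
      refine squeeze_zero (fun n => norm_nonneg _) hbound ?_
      have := ((hklim.mul hs).add he).add hs
      simpa using this
    have hshift : Filter.Tendsto (fun n => ‖x (n + 1) - T (x (n + 1))‖)
        Filter.atTop (nhds 0) := by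
      have hu : Filter.Tendsto (fun n => ‖T (T^[n] (x (n + 1))) - T (x (n + 1))‖)
          Filter.atTop (nhds 0) := by
        apply hucomp (fun n => T^[n] (x (n + 1))) (fun n => x (n + 1))
          (fun n => hTiter n _ (hxC (n + 1))) (fun n => hxC (n + 1)) hr
      have he1 : Filter.Tendsto (fun n => ‖x (n + 1) - T^[n + 1] (x (n + 1))‖)
          Filter.atTop (nhds 0) := by
        exact he.comp (tendsto_add_atTop_nat 1)
      have hbound : ∀ n, ‖x (n + 1) - T (x (n + 1))‖
          ≤ ‖x (n + 1) - T^[n + 1] (x (n + 1))‖ + ‖T (T^[n] (x (n + 1))) - T (x (n + 1))‖ := by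
        intro n
        rw [Function.iterate_succ_apply' T n (x (n + 1))]
        calc ‖x (n + 1) - T (x (n + 1))‖
            = ‖(x (n+1) - T (T^[n] (x (n+1)))) + (T (T^[n] (x (n+1))) - T (x (n+1)))‖ := by
              congr 1; abel
          _ ≤ _ := norm_add_le _ _
      refine squeeze_zero (fun n => norm_nonneg _) hbound ?_
      have := he1.add hu
      simpa using this
    exact (Filter.tendsto_add_atTop_iff_nat (f := fun n => ‖x n - T (x n)‖) 1).mp hshift
  -- ‖x n - T^[m] (x n)‖ → 0 for every fixed m
  have hTm : ∀ m : ℕ, Filter.Tendsto (fun n => ‖x n - T^[m] (x n)‖) Filter.atTop (nhds 0) := by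
    intro m
    induction m with
    | zero => simpa using tendsto_const_nhds
    | succ m ih =>
      have hu : Filter.Tendsto (fun n => ‖T (x n) - T (T^[m] (x n))‖)
          Filter.atTop (nhds 0) :=
        hucomp (fun n => x n) (fun n => T^[m] (x n)) hxC
          (fun n => hTiter m _ (hxC n)) ih
      have hbound : ∀ n, ‖x n - T^[m + 1] (x n)‖
          ≤ ‖x n - T (x n)‖ + ‖T (x n) - T (T^[m] (x n))‖ := by
        intro n
        rw [Function.iterate_succ_apply' T m (x n)]
        calc ‖x n - T (T^[m] (x n))‖
            = ‖(x n - T (x n)) + (T (x n) - T (T^[m] (x n)))‖ := by congr 1; abel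
          _ ≤ _ := norm_add_le _ _
      refine squeeze_zero (fun n => norm_nonneg _) hbound ?_
      have := hTx1.add hu
      simpa using this
  -- ## Ultrafilter limit
  obtain ⟨𝒰, h𝒰⟩ := Filter.exists_ultrafilter_le (Filter.atTop : Filter ℕ)
  obtain ⟨p, hp⟩ := weak_ultralim_exists 𝒰 x B (fun n => hB _ (hxC n))
  have hpC : p ∈ C := weak_lim_mem_closed_convex hclosed hconv 𝒰 x hxC p hp
  have hinner0 : ∀ v : H, Filter.Tendsto (fun n => (inner ℝ (x n - p) v : ℝ)) 𝒰 (nhds 0) := by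
    intro v
    have := (hp v).sub (tendsto_const_nhds (x := (inner ℝ p v : ℝ)))
    rw [sub_self] at this
    convert this using 2 with n
    exact inner_sub_left _ _ _
  obtain ⟨D, hD⟩ : ∃ D, Filter.Tendsto (fun n => ‖x n - p‖ ^ 2) 𝒰 (nhds D) := by
    refine ultralim_exists 𝒰 _ ((2 * B) ^ 2) fun n => ?_
    show |‖x n - p‖ ^ 2| ≤ (2 * B) ^ 2
    rw [abs_of_nonneg (sq_nonneg ‖x n - p‖)]
    have : ‖x n - p‖ ≤ 2 * B := by
      calc ‖x n - p‖ ≤ ‖x n‖ + ‖p‖ := norm_sub_le _ _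
        _ ≤ 2 * B := by linarith [hB _ (hxC n), hB _ hpC]
    nlinarith [norm_nonneg (x n - p)]
  have hD0 : 0 ≤ D := ge_of_tendsto hD (Filter.univ_mem' fun n => by
    exact sq_nonneg ‖x n - p‖)
  have haD : Filter.Tendsto (fun n => ‖x n - p‖) 𝒰 (nhds (Real.sqrt D)) := by
    have := hD.sqrt
    convert this using 2 with n
    rw [Real.sqrt_sq (norm_nonneg _)]
  -- p is a fixed point
  have hfixp : ∀ m : ℕ, ‖p - T^[m] p‖ ^ 2 ≤ ((k m) ^ 2 - 1) * D := by
    intro m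
    set δ : ℝ := ‖p - T^[m] p‖ with hδdef
    have h1 : Filter.Tendsto (fun n => ‖x n - T^[m] p‖ ^ 2) 𝒰 (nhds (D + δ ^ 2)) := by
      have hexp : ∀ n, ‖x n - T^[m] p‖ ^ 2
          = ‖x n - p‖ ^ 2 + 2 * inner ℝ (x n - p) (p - T^[m] p) + δ ^ 2 := by
        intro n
        have hid : x n - T^[m] p = (x n - p) + (p - T^[m] p) := by abel
        rw [hid, norm_add_sq_real]
      have := (hD.add ((hinner0 (p - T^[m] p)).const_mul 2)).add
        (tendsto_const_nhds (x := δ ^ 2))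
      have h2 : Filter.Tendsto (fun n => ‖x n - p‖ ^ 2 + 2 * inner ℝ (x n - p) (p - T^[m] p)
          + δ ^ 2) 𝒰 (nhds (D + 2 * 0 + δ ^ 2)) := by
        exact (hD.add ((hinner0 (p - T^[m] p)).const_mul 2)).add tendsto_const_nhds
      rw [show D + 2 * 0 + δ ^ 2 = D + δ ^ 2 by ring] at h2
      convert h2 using 2 with n
      exact hexp n
    have h1' : Filter.Tendsto (fun n => ‖x n - T^[m] p‖) 𝒰 (nhds (Real.sqrt (D + δ ^ 2))) := by
      have := h1.sqrt
      convert this using 2 with n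
      rw [Real.sqrt_sq (norm_nonneg _)]
    have h2 : Filter.Tendsto (fun n => ‖x n - T^[m] (x n)‖ + k m * ‖x n - p‖) 𝒰
        (nhds (0 + k m * Real.sqrt D)) :=
      (((hTm m).mono_left h𝒰)).add (haD.const_mul (k m))
    have hle : Real.sqrt (D + δ ^ 2) ≤ 0 + k m * Real.sqrt D := by
      refine le_of_tendsto_of_tendsto' h1' h2 fun n => ?_
      calc ‖x n - T^[m] p‖ ≤ ‖x n - T^[m] (x n)‖ + ‖T^[m] (x n) - T^[m] p‖ := by
            have hid : x n - T^[m] p = (x n - T^[m] (x n)) + (T^[m] (x n) - T^[m] p) := by abel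
            rw [hid]; exact norm_add_le _ _
        _ ≤ ‖x n - T^[m] (x n)‖ + k m * ‖x n - p‖ := by
            linarith [hane m (x n) (hxC n) p hpC]
    rw [zero_add] at hle
    have hkm0 : 0 ≤ k m := le_trans zero_le_one (hk1 m)
    have hsq := pow_le_pow_left₀ (Real.sqrt_nonneg _) hle 2
    rw [Real.sq_sqrt (by positivity), mul_pow, Real.sq_sqrt hD0] at hsq
    linarith
  have hfixT : T p = p := by
    have h3 : Filter.Tendsto (fun m => T^[m] p) Filter.atTop (nhds p) := by
      rw [tendsto_iff_norm_sub_tendsto_zero]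
      apply sqrt_trick _ (fun m => norm_nonneg _)
      have hlim : Filter.Tendsto (fun m => ((k m) ^ 2 - 1) * D) Filter.atTop (nhds 0) := by
        have := ((hklim.pow 2).sub (tendsto_const_nhds (x := (1:ℝ)))).mul_const D
        simpa using this
      refine squeeze_zero (fun m => sq_nonneg _) (fun m => ?_) hlim
      rw [norm_sub_rev]
      exact hfixp m
    have h4 : Filter.Tendsto (fun m => T^[m + 1] p) Filter.atTop (nhds p) := by
      exact h3.comp (tendsto_add_atTop_nat 1)
    have h5 : Filter.Tendsto (fun m => T (T^[m] p)) Filter.atTop (nhds (T p)) := by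
      have hcont : ContinuousWithinAt T C p := (hucont.continuousOn) p hpC
      have h6 : Filter.Tendsto (fun m => T^[m] p) Filter.atTop (nhdsWithin p C) := by
        rw [tendsto_nhdsWithin_iff]
        exact ⟨h3, Filter.Eventually.of_forall fun m => hTiter m p hpC⟩
      exact hcont.tendsto.comp h6
    have h7 : (fun m => T^[m + 1] p) = fun m => T (T^[m] p) := by
      ext m; exact Function.iterate_succ_apply' T m p
    rw [h7] at h4
    exact tendsto_nhds_unique h5 h4
  -- ## Strong convergence
  -- D = d^2 - ‖x₀ - p‖^2, hence ‖x₀ - p‖^2 ≤ d^2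
  have hx0p : ‖x₀ - p‖ ^ 2 ≤ d ^ 2 := by
    have hexp : ∀ n, ‖x n - p‖ ^ 2
        = c n ^ 2 + 2 * inner ℝ (x n - x₀) (x₀ - p) + ‖x₀ - p‖ ^ 2 := by
      intro n
      have hid : x n - p = (x n - x₀) + (x₀ - p) := by abel
      rw [hid, norm_add_sq_real, hcn, norm_sub_rev x₀ (x n)]
    have hi : Filter.Tendsto (fun n => (inner ℝ (x n - x₀) (x₀ - p) : ℝ)) 𝒰
        (nhds (- ‖x₀ - p‖ ^ 2)) := by
      have h1 : Filter.Tendsto (fun n => (inner ℝ (x n) (x₀ - p) : ℝ)) 𝒰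
          (nhds (inner ℝ p (x₀ - p))) := hp (x₀ - p)
      have h2 : Filter.Tendsto (fun n => (inner ℝ (x n) (x₀ - p) : ℝ)
          - inner ℝ x₀ (x₀ - p)) 𝒰 (nhds (inner ℝ p (x₀ - p) - inner ℝ x₀ (x₀ - p))) :=
        h1.sub tendsto_const_nhds
      have h3 : (inner ℝ p (x₀ - p) : ℝ) - inner ℝ x₀ (x₀ - p) = - ‖x₀ - p‖ ^ 2 := by
        rw [← inner_sub_left]
        have : p - x₀ = -(x₀ - p) := by abel
        rw [this, inner_neg_left, real_inner_self_eq_norm_sq]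
        try ring
      rw [h3] at h2
      convert h2 using 2 with n
      rw [inner_sub_left]
    have hc2 : Filter.Tendsto (fun n => c n ^ 2) 𝒰 (nhds (d ^ 2)) :=
      (hd.pow 2).mono_left h𝒰
    have hrhs : Filter.Tendsto (fun n => c n ^ 2 + 2 * inner ℝ (x n - x₀) (x₀ - p)
        + ‖x₀ - p‖ ^ 2) 𝒰 (nhds (d ^ 2 + 2 * (- ‖x₀ - p‖ ^ 2) + ‖x₀ - p‖ ^ 2)) :=
      (hc2.add (hi.const_mul 2)).add tendsto_const_nhds
    have hDeq : D = d ^ 2 + 2 * (- ‖x₀ - p‖ ^ 2) + ‖x₀ - p‖ ^ 2 := by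
      refine tendsto_nhds_unique (l := (𝒰 : Filter ℕ)) hD ?_
      convert hrhs using 2 with n
      exact hexp n
    nlinarith [hD0]
  -- final squeeze
  have hfinal : Filter.Tendsto x Filter.atTop (nhds p) := by
    rw [tendsto_iff_norm_sub_tendsto_zero]
    apply sqrt_trick _ (fun n => norm_nonneg _)
    have hlim : Filter.Tendsto (fun n => d ^ 2 - c n ^ 2) Filter.atTop (nhds 0) := by
      have := (tendsto_const_nhds (x := d ^ 2) (f := Filter.atTop (α := ℕ))).sub (hd.pow 2)
      simpa using this
    refine squeeze_zero (fun n => sq_nonneg _) (fun n => ?_) hlim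
    have h := hQkey n p (memQs p hpC hfixT n)
    rw [hcn]
    linarith [hx0p]
  refine ⟨p, ⟨hpC, hfixT⟩, fun q' hq'C hq'T => ?_, hfinal⟩
  have h1 : ‖x₀ - p‖ ≤ d := le_of_sq_le_sq' (norm_nonneg _) hd0 hx0p
  exact h1.trans (hdle q' hq'C hq'T)
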